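/- (Universal uncertainty relation for interactive measurements, single-intervention case.) Let T = {T_x}_{x=1}^m and S = {S_y}_{y=1}^m be two testers and let w be their roulette vector. Then for every process comb J, writing p_x := Tr[J T_x] and q_y := Tr[J S_y], the concatenated vector (1/2)p ⊕ (1/2)q ∈ ℝ^{2m} is majorized by w; in particular the bound w is independent of the probed process J. -/

import Mathlib

open Matrix BigOperators ComplexOrder

noncomputable section

/-- Index type for the three systems A, B, C. -/
abbrev PIdx (dA dB dC : ℕ) := Fin dA × Fin dB × Fin dC

/-- Matrices on `ℂ^{dA} ⊗ ℂ^{dB} ⊗ ℂ^{dC}`. -/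
abbrev PMat (dA dB dC : ℕ) := Matrix (PIdx dA dB dC) (PIdx dA dB dC) ℂ

/-- Partial trace over the third (C) tensor factor. -/
def trC {dA dB dC : ℕ} (M : PMat dA dB dC) :
    Matrix (Fin dA × Fin dB) (Fin dA × Fin dB) ℂ :=
  Matrix.of fun i j => ∑ c : Fin dC, M (i.1, i.2, c) (j.1, j.2, c)

/-- Partial trace over the second tensor factor of a bipartite matrix. -/
def trSnd {d₁ d₂ : ℕ} (M : Matrix (Fin d₁ × Fin d₂) (Fin d₁ × Fin d₂) ℂ) :
    Matrix (Fin d₁) (Fin d₁) ℂ :=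
  Matrix.of fun a a' => ∑ b : Fin d₂, M (a, b) (a', b)

/-- A process comb: a PSD matrix `J` on A ⊗ B ⊗ C with `Tr_C J = ρ_A ⊗ I_B`
for some state `ρ_A`. -/
def IsProcessComb {dA dB dC : ℕ} (J : PMat dA dB dC) : Prop :=
  J.PosSemidef ∧ ∃ ρ : Matrix (Fin dA) (Fin dA) ℂ,
    ρ.PosSemidef ∧ ρ.trace = 1 ∧
    trC J = Matrix.of fun i j => ρ i.1 j.1 * (if i.2 = j.2 then (1 : ℂ) else 0)

/-- A tester with `m` outcomes: PSD matrices `T x` with `∑ x, T x = Λ ⊗ I_C`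
for some PSD `Λ` on A ⊗ B with `Tr_B Λ = I_A`. -/
def IsTester {dA dB dC m : ℕ} (T : Fin m → PMat dA dB dC) : Prop :=
  (∀ x, (T x).PosSemidef) ∧
  ∃ Λ : Matrix (Fin dA × Fin dB) (Fin dA × Fin dB) ℂ,
    Λ.PosSemidef ∧ trSnd Λ = 1 ∧
    (∑ x, T x) = Matrix.of fun i j =>
      Λ (i.1, i.2.1) (j.1, j.2.1) * (if i.2.2 = j.2.2 then (1 : ℂ) else 0)

/-- Outcome probability `Tr[J T]` (as a real number). -/
def prob {dA dB dC : ℕ} (J T : PMat dA dB dC) : ℝ := ((J * T).trace).re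

/-- `P_k`: Bob's optimal winning probability in the quantum roulette with `k` chips,
for the pair of testers `T`, `S`. -/
def rouletteP {dA dB dC m : ℕ} (T S : Fin m → PMat dA dB dC) (k : ℕ) : ℝ :=
  sSup { r : ℝ | ∃ J : PMat dA dB dC, IsProcessComb J ∧
    ∃ G : Finset (Fin 2 × Fin m), G.card = k ∧
      r = ∑ g ∈ G, (1 / 2 : ℝ) * prob J (if g.1 = 0 then T g.2 else S g.2) }

/-- The roulette vector `w ∈ ℝ^{2m}`, `w_k = P_k - P_{k-1}`. -/
def rouletteW {dA dB dC m : ℕ} (T S : Fin m → PMat dA dB dC) : Fin (m + m) → ℝ :=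
  fun k => rouletteP T S (k.1 + 1) - rouletteP T S k.1

/-- Sum of the `k` largest entries of a (nonnegative) vector, padding with zeros. -/
def kMaxSum {n : ℕ} (u : Fin n → ℝ) (k : ℕ) : ℝ :=
  sSup { r : ℝ | ∃ A : Finset (Fin n), A.card = min k n ∧ r = ∑ i ∈ A, u i }

/-- `MajorizedBy u v` means `u ≺ v`: every partial sum of the `k` largest entries of `u`
is at most that of `v`, and the total sums agree. -/
def MajorizedBy {m n : ℕ} (u : Fin m → ℝ) (v : Fin n → ℝ) : Prop :=
  (∀ k : ℕ, kMaxSum u k ≤ kMaxSum v k) ∧ ∑ i, u i = ∑ i, v i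

/-- Base-2 Shannon entropy of a finite vector. -/
def H2 {n : ℕ} (p : Fin n → ℝ) : ℝ := -∑ i, p i * Real.logb 2 (p i)


/-- Auxiliary: the real part of the trace of a product of PSD matrices is nonnegative. -/
lemma re_trace_mul_nonneg {n : Type*} [Fintype n] [DecidableEq n] {J T : Matrix n n ℂ}
    (hJ : J.PosSemidef) (hT : T.PosSemidef) : 0 ≤ ((J * T).trace).re := by
  obtain ⟨A, rfl⟩ : ∃ A : Matrix n n ℂ, J = Aᴴ * A := by
    open scoped MatrixOrder in exact CStarAlgebra.nonneg_iff_eq_star_mul_self.mp hJ.nonneg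
  obtain ⟨B, rfl⟩ : ∃ B : Matrix n n ℂ, T = Bᴴ * B := by
    open scoped MatrixOrder in exact CStarAlgebra.nonneg_iff_eq_star_mul_self.mp hT.nonneg
  have h : (Aᴴ * A * (Bᴴ * B)).trace = ((A * Bᴴ)ᴴ * (A * Bᴴ)).trace := by
    rw [Matrix.conjTranspose_mul, Matrix.conjTranspose_conjTranspose,
      show Aᴴ * A * (Bᴴ * B) = (Aᴴ * (A * Bᴴ)) * B by simp [Matrix.mul_assoc],
      Matrix.trace_mul_comm, Matrix.mul_assoc]
  rw [h]
  set M := A * Bᴴ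
  have : (Mᴴ * M).trace = ∑ j, ∑ i, (starRingEnd ℂ) (M i j) * M i j := by
    simp [Matrix.trace, Matrix.mul_apply, Matrix.diag, Matrix.conjTranspose_apply]
  rw [this, Complex.re_sum]
  refine Finset.sum_nonneg fun j _ => ?_
  rw [Complex.re_sum]
  refine Finset.sum_nonneg fun i _ => ?_
  simpa [Complex.normSq_apply] using Complex.normSq_nonneg (M i j)

/-- Auxiliary: trace of a comb against `Λ ⊗ I_C` equals 1. -/
lemma trace_comb_tester {dA dB dC : ℕ}
    (J : PMat dA dB dC)
    (ρ : Matrix (Fin dA) (Fin dA) ℂ) (hρtr : ρ.trace = 1)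
    (htrC : trC J = Matrix.of fun i j => ρ i.1 j.1 * (if i.2 = j.2 then (1:ℂ) else 0))
    (Λ : Matrix (Fin dA × Fin dB) (Fin dA × Fin dB) ℂ) (hΛ : trSnd Λ = 1) :
    (J * (Matrix.of fun i j : PIdx dA dB dC =>
      Λ (i.1, i.2.1) (j.1, j.2.1) * (if i.2.2 = j.2.2 then (1:ℂ) else 0))).trace = 1 := by
  have step1 : (J * (Matrix.of fun i j : PIdx dA dB dC =>
      Λ (i.1, i.2.1) (j.1, j.2.1) * (if i.2.2 = j.2.2 then (1:ℂ) else 0))).trace =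
      ∑ a : Fin dA, ∑ b : Fin dB, ∑ a' : Fin dA, ∑ b' : Fin dB,
        trC J (a,b) (a',b') * Λ (a',b') (a,b) := by
    simp only [Matrix.trace, Matrix.diag, Matrix.mul_apply, Fintype.sum_prod_type,
      Matrix.of_apply, mul_ite, mul_one, mul_zero, Finset.sum_ite_eq, Finset.sum_ite_eq',
      Finset.mem_univ, if_true, trC, Finset.sum_mul]
    refine Finset.sum_congr rfl fun a _ => Finset.sum_congr rfl fun b _ => ?_
    rw [Finset.sum_comm]
    exact Finset.sum_congr rfl fun a' _ => Finset.sum_comm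
  rw [step1]
  have step2 : ∀ a b, ∑ a' : Fin dA, ∑ b' : Fin dB, trC J (a,b) (a',b') * Λ (a',b') (a,b)
      = ∑ a' : Fin dA, ρ a a' * Λ (a', b) (a, b) := by
    intro a b
    rw [htrC]
    simp [mul_ite, ite_mul, mul_assoc]
  simp only [step2]
  have step3 : ∀ a, ∑ b : Fin dB, ∑ a' : Fin dA, ρ a a' * Λ (a', b) (a, b) = ρ a a := by
    intro a
    rw [Finset.sum_comm]
    have h4 : ∀ a', ∑ b, ρ a a' * Λ (a', b) (a, b) = ρ a a' * trSnd Λ a' a := by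
      intro a'; rw [show trSnd Λ a' a = ∑ b, Λ (a',b) (a,b) from rfl, Finset.mul_sum]
    simp only [h4, hΛ]
    simp [Matrix.one_apply]
  simp only [step3]
  simpa [Matrix.trace, Matrix.diag] using hρtr

/-- Auxiliary: the total outcome probability of a tester on a comb is 1. -/
lemma sum_prob_eq_one {dA dB dC m : ℕ} {J : PMat dA dB dC} (hJ : IsProcessComb J)
    {T : Fin m → PMat dA dB dC} (hT : IsTester T) : ∑ x, prob J (T x) = 1 := by
  obtain ⟨hpsd, ρ, hρ, hρtr, htrC⟩ := hJ
  obtain ⟨hTpsd, Λ, hΛpsd, hΛ, hsum⟩ := hT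
  have h1 : ∑ x, prob J (T x) = ((J * ∑ x, T x).trace).re := by
    rw [Finset.mul_sum, Matrix.trace_sum, Complex.re_sum]
    rfl
  rw [h1, hsum, trace_comb_tester J ρ hρtr htrC Λ hΛ, Complex.one_re]

/-- universal uncertainty relation for interactive measurements,
single-intervention case: for any two testers `T`, `S` with roulette vector `w`
and any process comb `J`, the concatenation `(1/2)p ⊕ (1/2)q` of the halved outcome
distributions is majorized by `w`; the bound `w` does not depend on `J`. -/
theorem universal_uncertainty_relation_interactive
    {dA dB dC m : ℕ} (hA : 0 < dA) (hB : 0 < dB) (hC : 0 < dC)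
    (T S : Fin m → PMat dA dB dC) (hT : IsTester T) (hS : IsTester S)
    (J : PMat dA dB dC) (hJ : IsProcessComb J) :
    MajorizedBy
      (Fin.append (fun x => prob J (T x) / 2) (fun y => prob J (S y) / 2))
      (rouletteW T S) := by
  classical
  set P : ℕ → ℝ := rouletteP T S with hPdef
  set w : Fin (m + m) → ℝ := rouletteW T S with hwdef
  have hcard_univ : Fintype.card (Fin 2 × Fin m) = m + m := by
    simp [two_mul]
  -- nonnegativity of each score term
  have hterm : ∀ (J' : PMat dA dB dC), IsProcessComb J' → ∀ g : Fin 2 × Fin m,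
      0 ≤ (1/2 : ℝ) * prob J' (if g.1 = 0 then T g.2 else S g.2) := by
    intro J' hJ' g
    have : 0 ≤ prob J' (if g.1 = 0 then T g.2 else S g.2) := by
      split
      · exact re_trace_mul_nonneg hJ'.1 (hT.1 g.2)
      · exact re_trace_mul_nonneg hJ'.1 (hS.1 g.2)
    linarith
  have hscore_nonneg : ∀ (J' : PMat dA dB dC), IsProcessComb J' →
      ∀ G : Finset (Fin 2 × Fin m),
      0 ≤ ∑ g ∈ G, (1/2 : ℝ) * prob J' (if g.1 = 0 then T g.2 else S g.2) :=
    fun J' hJ' G => Finset.sum_nonneg fun g _ => hterm J' hJ' g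
  have hscore_univ : ∀ (J' : PMat dA dB dC), IsProcessComb J' →
      ∑ g : Fin 2 × Fin m, (1/2 : ℝ) * prob J' (if g.1 = 0 then T g.2 else S g.2) = 1 := by
    intro J' hJ'
    rw [Fintype.sum_prod_type, Fin.sum_univ_two]
    simp only [show ((0 : Fin 2) = 0) = True by simp, show ((1 : Fin 2) = 0) = False by simp,
      if_true, if_false]
    rw [← Finset.mul_sum, ← Finset.mul_sum, sum_prob_eq_one hJ' hT, sum_prob_eq_one hJ' hS]
    norm_num
  have hscore_le_one : ∀ (J' : PMat dA dB dC), IsProcessComb J' →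
      ∀ G : Finset (Fin 2 × Fin m),
      ∑ g ∈ G, (1/2 : ℝ) * prob J' (if g.1 = 0 then T g.2 else S g.2) ≤ 1 := by
    intro J' hJ' G
    calc ∑ g ∈ G, (1/2 : ℝ) * prob J' (if g.1 = 0 then T g.2 else S g.2)
        ≤ ∑ g : Fin 2 × Fin m, (1/2 : ℝ) * prob J' (if g.1 = 0 then T g.2 else S g.2) :=
          Finset.sum_le_sum_of_subset_of_nonneg (Finset.subset_univ G)
            (fun g _ _ => hterm J' hJ' g)
      _ = 1 := hscore_univ J' hJ'
  have hbdd : ∀ k : ℕ, BddAbove { r : ℝ | ∃ J : PMat dA dB dC, IsProcessComb J ∧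
      ∃ G : Finset (Fin 2 × Fin m), G.card = k ∧
        r = ∑ g ∈ G, (1 / 2 : ℝ) * prob J (if g.1 = 0 then T g.2 else S g.2) } := by
    intro k
    refine ⟨1, ?_⟩
    rintro r ⟨J', hJ', G, hG, rfl⟩
    exact hscore_le_one J' hJ' G
  have hPle : ∀ (k : ℕ) (J' : PMat dA dB dC), IsProcessComb J' →
      ∀ G : Finset (Fin 2 × Fin m), G.card = k →
      ∑ g ∈ G, (1/2 : ℝ) * prob J' (if g.1 = 0 then T g.2 else S g.2) ≤ P k :=
    fun k J' hJ' G hG => le_csSup (hbdd k) ⟨J', hJ', G, hG, rfl⟩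
  have hPub : ∀ (k : ℕ) (a : ℝ), 0 ≤ a →
      (∀ (J' : PMat dA dB dC), IsProcessComb J' → ∀ G : Finset (Fin 2 × Fin m), G.card = k →
        ∑ g ∈ G, (1/2 : ℝ) * prob J' (if g.1 = 0 then T g.2 else S g.2) ≤ a) →
      P k ≤ a := by
    intro k a ha h
    refine Real.sSup_le ?_ ha
    rintro r ⟨J', hJ', G, hG, rfl⟩
    exact h J' hJ' G hG
  have hGex : ∀ k, k ≤ m + m → ∃ G : Finset (Fin 2 × Fin m), G.card = k := by
    intro k hk
    obtain ⟨G, _, hG⟩ := Finset.exists_subset_card_eq (s := (Finset.univ : Finset (Fin 2 × Fin m))) (n := k)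
      (by rw [Finset.card_univ, hcard_univ]; exact hk)
    exact ⟨G, hG⟩
  have hP0 : P 0 = 0 := by
    refine le_antisymm (hPub 0 0 le_rfl ?_) (le_csSup (hbdd 0) ⟨J, hJ, ∅, Finset.card_empty, by simp⟩)
    intro J' hJ' G hG
    rw [Finset.card_eq_zero.mp hG]
    simp
  have hPnonneg : ∀ k, k ≤ m + m → 0 ≤ P k := by
    intro k hk
    obtain ⟨G, hG⟩ := hGex k hk
    exact le_trans (hscore_nonneg J hJ G) (hPle k J hJ G hG)
  have hPmono : ∀ k, k < m + m → P k ≤ P (k + 1) := by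
    intro k hk
    refine hPub k _ (hPnonneg (k+1) hk) ?_
    intro J' hJ' G hG
    obtain ⟨G', hGG', hG'⟩ := Finset.exists_superset_card_eq
      (s := G) (n := k + 1) (by omega) (by rw [hcard_univ]; omega)
    calc ∑ g ∈ G, (1/2 : ℝ) * prob J' (if g.1 = 0 then T g.2 else S g.2)
        ≤ ∑ g ∈ G', (1/2 : ℝ) * prob J' (if g.1 = 0 then T g.2 else S g.2) :=
          Finset.sum_le_sum_of_subset_of_nonneg hGG' (fun g _ _ => hterm J' hJ' g)
      _ ≤ P (k+1) := hPle (k+1) J' hJ' G' hG'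
  have hPtop : P (m + m) = 1 := by
    refine le_antisymm (hPub _ 1 zero_le_one ?_)
      (le_csSup (hbdd _) ⟨J, hJ, Finset.univ, by rw [Finset.card_univ, hcard_univ],
        (hscore_univ J hJ).symm⟩)
    intro J' hJ' G hG
    have hGu : G = Finset.univ := Finset.eq_univ_of_card _ (by rw [hG, hcard_univ])
    rw [hGu]
    exact (hscore_univ J' hJ').le
  have hwnn : ∀ i : Fin (m + m), 0 ≤ w i := fun i => sub_nonneg.2 (hPmono i.1 i.2)
  -- partial sums of w realize the P's
  have hwsumA : ∀ k', (hk' : k' ≤ m + m) → ∃ A : Finset (Fin (m + m)),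
      A.card = k' ∧ ∑ i ∈ A, w i = P k' := by
    intro k' hk'
    refine ⟨Finset.map (Fin.castLEEmb hk') Finset.univ, by simp, ?_⟩
    rw [Finset.sum_map]
    have h1 : ∀ i : Fin k', w ((Fin.castLEEmb hk') i) = P (i.1 + 1) - P i.1 :=
      fun i => rfl
    rw [Finset.sum_congr rfl (fun i _ => h1 i),
      Fin.sum_univ_eq_sum_range (fun j => P (j + 1) - P j) k',
      Finset.sum_range_sub, hP0, sub_zero]
  have hwsum_univ : ∑ i, w i = 1 := by
    have h1 : ∀ i : Fin (m + m), w i = P (i.1 + 1) - P i.1 := fun i => rfl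
    rw [Finset.sum_congr rfl (fun i _ => h1 i),
      Fin.sum_univ_eq_sum_range (fun j => P (j + 1) - P j) (m + m),
      Finset.sum_range_sub, hP0, sub_zero, hPtop]
  have hbddW : ∀ k : ℕ, BddAbove { r : ℝ | ∃ A : Finset (Fin (m + m)),
      A.card = min k (m + m) ∧ r = ∑ i ∈ A, w i } := by
    intro k
    refine ⟨1, ?_⟩
    rintro r ⟨A, hA, rfl⟩
    calc ∑ i ∈ A, w i ≤ ∑ i, w i :=
          Finset.sum_le_sum_of_subset_of_nonneg (Finset.subset_univ A) (fun i _ _ => hwnn i)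
      _ = 1 := hwsum_univ
  have hkw_ge : ∀ k : ℕ, P (min k (m + m)) ≤ kMaxSum w k := by
    intro k
    obtain ⟨A, hA, hsum⟩ := hwsumA (min k (m + m)) (min_le_right _ _)
    exact hsum ▸ le_csSup (hbddW k) ⟨A, hA, rfl⟩
  -- the injection from Fin (m+m) into game positions
  set φ : Fin (m + m) → Fin 2 × Fin m := fun i =>
    if h : (i : ℕ) < m then ((0 : Fin 2), (⟨(i : ℕ), h⟩ : Fin m))
    else ((1 : Fin 2), (⟨(i : ℕ) - m, by have := i.isLt; omega⟩ : Fin m)) with hφdef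
  have hφinj : Function.Injective φ := by
    intro i j hij
    by_cases hi : (i : ℕ) < m <;> by_cases hj : (j : ℕ) < m <;>
      simp only [hφdef, hi, hj, dif_pos, dif_neg, not_false_iff, Prod.mk.injEq,
        Fin.mk.injEq] at hij <;>
      [skip; exact absurd hij.1 (by decide); exact absurd hij.1 (by decide); skip] <;>
      · have hii := i.isLt; have hjj := j.isLt
        exact Fin.ext (by omega)
  set u : Fin (m + m) → ℝ :=
    Fin.append (fun x => prob J (T x) / 2) (fun y => prob J (S y) / 2) with hudef
  have hterm_eq : ∀ i : Fin (m + m),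
      u i = (1/2 : ℝ) * prob J (if (φ i).1 = 0 then T (φ i).2 else S (φ i).2) := by
    intro i
    by_cases h : (i : ℕ) < m
    · have e2 : φ i = ((0 : Fin 2), (⟨(i : ℕ), h⟩ : Fin m)) := by
        rw [hφdef]; exact dif_pos h
      have e1 : u i = prob J (T ⟨(i : ℕ), h⟩) / 2 := by
        have hi : i = Fin.castAdd m (⟨(i : ℕ), h⟩ : Fin m) := Fin.ext rfl
        rw [hudef]
        conv_lhs => rw [hi]
        rw [Fin.append_left]
      rw [e1, e2]
      norm_num
      ring
    · have e2 : φ i = ((1 : Fin 2), (⟨(i : ℕ) - m, by have := i.isLt; omega⟩ : Fin m)) := by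
        rw [hφdef]; exact dif_neg h
      have e1 : u i = prob J (S ⟨(i : ℕ) - m, by have := i.isLt; omega⟩) / 2 := by
        have hi : i = Fin.natAdd m (⟨(i : ℕ) - m, by have := i.isLt; omega⟩ : Fin m) := by
          refine Fin.ext ?_
          simp only [Fin.natAdd_mk]
          omega
        rw [hudef]
        conv_lhs => rw [hi]
        rw [Fin.append_right]
      rw [e1, e2]
      norm_num
      ring
  have hu_le : ∀ k : ℕ, kMaxSum u k ≤ P (min k (m + m)) := by
    intro k
    refine Real.sSup_le ?_ (hPnonneg _ (min_le_right _ _))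
    rintro r ⟨A, hA, rfl⟩
    have hmap : ∑ i ∈ A, u i = ∑ g ∈ Finset.map ⟨φ, hφinj⟩ A,
        (1/2 : ℝ) * prob J (if g.1 = 0 then T g.2 else S g.2) := by
      rw [Finset.sum_map]
      exact Finset.sum_congr rfl fun i _ => hterm_eq i
    rw [hmap]
    exact hPle _ J hJ _ (by rw [Finset.card_map, hA])
  have husum : ∑ i, u i = 1 := by
    rw [hudef, Fin.sum_univ_add]
    simp only [Fin.append_left, Fin.append_right]
    rw [← Finset.sum_div, ← Finset.sum_div, sum_prob_eq_one hJ hT, sum_prob_eq_one hJ hS]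
    norm_num
  refine ⟨fun k => ?_, ?_⟩
  · exact le_trans (hu_le k) (hkw_ge k)
  · rw [husum, hwsum_univ]
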